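/- For any ρ, σ, τ ∈ ℤ^d, Σ_{ℓ ∈ ℤ^d} (D_ρ D_σ D_τ δ₀)(ℓ) ⊗ ℓ^{⊗3} = −6·(ρ ⊙ σ ⊙ τ), where ρ ⊙ σ ⊙ τ = (1/6)Σ_{permutations} is the symmetrized triple tensor product and ℓ^{⊗3} = ℓ ⊗ ℓ ⊗ ℓ. -/
import Mathlib

/-- Kronecker delta at the origin on `ℤ^d`. -/
def kdelta {d : ℕ} (ℓ : Fin d → ℤ) : ℝ := if ℓ = 0 then 1 else 0

/-- Finite-difference operator on scalar lattice functions. -/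
def DopS {d : ℕ} (ρ : Fin d → ℤ) (f : (Fin d → ℤ) → ℝ) : (Fin d → ℤ) → ℝ :=
  fun ℓ => f (ℓ + ρ) - f ℓ

/-- Cast a lattice point to a real vector. -/
def toR {d : ℕ} (ℓ : Fin d → ℤ) : Fin d → ℝ := fun j => (ℓ j : ℝ)

/-- Third-order elementary tensor `a ⊗ b ⊗ c` in coordinates. -/
def tens3 {d : ℕ} (a b c : Fin d → ℝ) : Fin d → Fin d → Fin d → ℝ :=
  fun i j k => a i * b j * c k

/-- Symmetrized triple tensor product: the average over all six permutations. -/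
noncomputable def symTens3 {d : ℕ} (a b c : Fin d → ℝ) : Fin d → Fin d → Fin d → ℝ :=
  ((1 : ℝ) / 6) • (tens3 a b c + tens3 a c b + tens3 b a c + tens3 b c a +
    tens3 c a b + tens3 c b a)

section aux

variable {d : ℕ}

/-- `F ℓ = ℓ^{⊗3}`. -/
noncomputable def F3 (ℓ : Fin d → ℤ) : Fin d → Fin d → Fin d → ℝ :=
  tens3 (toR ℓ) (toR ℓ) (toR ℓ)

/-- Single-point weighted function. -/
noncomputable def E3 (c : ℝ) (v : Fin d → ℤ) : (Fin d → ℤ) → Fin d → Fin d → Fin d → ℝ :=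
  fun ℓ => (if ℓ = -v then c else 0) • F3 ℓ

lemma suppE3 (c : ℝ) (v : Fin d → ℤ) : (Function.support (E3 c v)).Finite := by
  apply (Set.finite_singleton (-v)).subset
  intro x hx
  by_contra h
  exact hx (by simp [E3, Set.mem_singleton_iff] at h ⊢; simp [h])

lemma finsumE3 (c : ℝ) (v : Fin d → ℤ) : ∑ᶠ ℓ, E3 c v ℓ = c • F3 (-v) := by
  rw [finsum_eq_single _ (-v)]
  · simp [E3]
  · intro x hx; simp [E3, hx]

lemma supp_add' {α M : Type*} [AddCommMonoid M] {f g : α → M}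
    (hf : (Function.support f).Finite) (hg : (Function.support g).Finite) :
    (Function.support (fun x => f x + g x)).Finite :=
  (hf.union hg).subset (Function.support_add f g)

end aux

/-- Third-moment identity: `Σ_ℓ (D_ρ D_σ D_τ δ₀)(ℓ) ⊗ ℓ^{⊗3} = −6 (ρ ⊙ σ ⊙ τ)`. -/
theorem stmt13 {d : ℕ} (ρ σ τ : Fin d → ℤ) :
    (∑ᶠ ℓ : Fin d → ℤ,
        (DopS ρ (DopS σ (DopS τ kdelta))) ℓ • tens3 (toR ℓ) (toR ℓ) (toR ℓ)) =
      (-6 : ℝ) • symTens3 (toR ρ) (toR σ) (toR τ) := by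
  have hfun : (fun ℓ => (DopS ρ (DopS σ (DopS τ kdelta))) ℓ • tens3 (toR ℓ) (toR ℓ) (toR ℓ))
      = fun ℓ => E3 1 (ρ+σ+τ) ℓ + (E3 (-1) (σ+ρ) ℓ + (E3 (-1) (τ+ρ) ℓ + (E3 1 ρ ℓ +
        (E3 (-1) (τ+σ) ℓ + (E3 1 σ ℓ + (E3 1 τ ℓ + E3 (-1) 0 ℓ)))))) := by
    funext ℓ
    simp only [DopS, kdelta, E3, F3]
    have hiff : ∀ v : Fin d → ℤ, (ℓ + v = 0) = (ℓ = -v) := by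
      intro v; simp [add_eq_zero_iff_eq_neg]
    have hneg : ∀ (P : Prop) [Decidable P], (if P then (-1:ℝ) else 0) = -(if P then 1 else 0) := by
      intro P _; split <;> simp
    simp only [add_assoc, hiff, hneg, neg_smul, neg_zero]
    simp only [sub_smul, add_smul]
    abel
  rw [hfun]
  have s1 := suppE3 (d := d) 1
  have sm := suppE3 (d := d) (-1)
  rw [finsum_add_distrib (s1 _) (supp_add' (sm _) (supp_add' (sm _) (supp_add' (s1 _)
      (supp_add' (sm _) (supp_add' (s1 _) (supp_add' (s1 _) (sm _)))))))]
  rw [finsum_add_distrib (sm _) (supp_add' (sm _) (supp_add' (s1 _)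
      (supp_add' (sm _) (supp_add' (s1 _) (supp_add' (s1 _) (sm _))))))]
  rw [finsum_add_distrib (sm _) (supp_add' (s1 _)
      (supp_add' (sm _) (supp_add' (s1 _) (supp_add' (s1 _) (sm _)))))]
  rw [finsum_add_distrib (s1 _) (supp_add' (sm _) (supp_add' (s1 _) (supp_add' (s1 _) (sm _))))]
  rw [finsum_add_distrib (sm _) (supp_add' (s1 _) (supp_add' (s1 _) (sm _)))]
  rw [finsum_add_distrib (s1 _) (supp_add' (s1 _) (sm _))]
  rw [finsum_add_distrib (s1 _) (sm _)]
  simp only [finsumE3]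
  funext i j k
  simp only [F3, tens3, toR, symTens3, Pi.smul_apply, Pi.add_apply, Pi.neg_apply,
    smul_eq_mul, one_smul, neg_smul, neg_neg, neg_zero, Pi.zero_apply, Int.cast_zero]
  push_cast
  ring
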